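/- Let q = n+1 and consider the formal power series expansion in ℤ[[t]] of F(t) = ∏_{j=1}^{n} (1+jt)^{(-1)^{j+1} h_{n-j}}, where h_0, …, h_{n-1} are nonnegative integers (with negative exponents interpreted via geometric series). Then the coefficient s_n of t^n satisfies s_n ≡ C(h, n) mod 2, where h := Σ_{j=0}^{⌊(n-1)/2⌋} h_{n-1-2j} and C(h,n) is the binomial coefficient. -/

import Mathlib

open PowerSeries Finset

lemma sum_odd_filter (n : ℕ) (h : ℕ → ℕ) (hn : 1 ≤ n) :
    ∑ j ∈ (Finset.Icc 1 n).filter (fun j => Odd j), h (n - j) =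
    ∑ j ∈ Finset.range ((n - 1) / 2 + 1), h (n - 1 - 2 * j) := by
  refine Finset.sum_nbij' (fun j => (j - 1) / 2) (fun k => 2 * k + 1) ?_ ?_ ?_ ?_ ?_
  · intro j hj
    simp only [Finset.mem_filter, Finset.mem_Icc] at hj
    simp only [Finset.mem_range]
    obtain ⟨⟨h1, h2⟩, k, hk⟩ := hj
    omega
  · intro k hk
    simp only [Finset.mem_range] at hk
    simp only [Finset.mem_filter, Finset.mem_Icc]
    exact ⟨⟨by omega, by omega⟩, ⟨k, by omega⟩⟩
  · intro j hj
    simp only [Finset.mem_filter, Finset.mem_Icc] at hj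
    obtain ⟨⟨h1, h2⟩, k, hk⟩ := hj
    omega
  · intro k hk
    simp only [Finset.mem_range] at hk
    omega
  · intro j hj
    simp only [Finset.mem_filter, Finset.mem_Icc] at hj
    obtain ⟨⟨h1, h2⟩, k, hk⟩ := hj
    congr 1
    omega

/-- Parity of the coefficient `s_n` of `t^n` in
`F(t) = ∏_{j=1}^{n} (1+jt)^{(-1)^{j+1} h_{n-j}} ∈ ℤ[[t]]`:
`s_n ≡ C(h, n) (mod 2)` where `h = Σ_{j=0}^{⌊(n-1)/2⌋} h_{n-1-2j}`.
The series `F` is characterized by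
`F · ∏_{j even} (1+jt)^{h_{n-j}} = ∏_{j odd} (1+jt)^{h_{n-j}}`. -/
theorem stmt10 (n : ℕ) (h : ℕ → ℕ) (F : PowerSeries ℤ)
    (hF : F * ∏ j ∈ (Finset.Icc 1 n).filter (fun j => Even j),
        (1 + PowerSeries.C (j : ℤ) * PowerSeries.X) ^ (h (n - j)) =
      ∏ j ∈ (Finset.Icc 1 n).filter (fun j => Odd j),
        (1 + PowerSeries.C (j : ℤ) * PowerSeries.X) ^ (h (n - j))) :
    PowerSeries.coeff n F ≡
      ((∑ j ∈ Finset.range ((n - 1) / 2 + 1), h (n - 1 - 2 * j)).choose n : ℤ)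
        [ZMOD 2] := by
  rcases Nat.eq_zero_or_pos n with rfl | hn
  · simp only [Finset.Icc_eq_empty (by omega : ¬(1:ℕ) ≤ 0), Finset.filter_empty,
      Finset.prod_empty, mul_one] at hF
    rw [hF]
    simp [Nat.choose_zero_right, Int.ModEq]
  have hmap := congrArg (PowerSeries.map (Int.castRingHom (ZMod 2))) hF
  rw [map_mul, map_prod, map_prod] at hmap
  have heven : ∀ j ∈ (Finset.Icc 1 n).filter (fun j => Even j),
      PowerSeries.map (Int.castRingHom (ZMod 2))
        ((1 + PowerSeries.C (j : ℤ) * PowerSeries.X) ^ (h (n - j))) = 1 := by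
    intro j hj
    simp only [Finset.mem_filter] at hj
    have hj0 : ((j : ℕ) : ZMod 2) = 0 := by
      rw [← ZMod.natCast_mod, Nat.even_iff.mp hj.2]; rfl
    rw [map_pow, map_add, map_one, map_mul, PowerSeries.map_C, PowerSeries.map_X]
    simp [Int.coe_castRingHom, Int.cast_natCast, hj0]
  have hodd : ∀ j ∈ (Finset.Icc 1 n).filter (fun j => Odd j),
      PowerSeries.map (Int.castRingHom (ZMod 2))
        ((1 + PowerSeries.C (j : ℤ) * PowerSeries.X) ^ (h (n - j))) =
      (1 + PowerSeries.X) ^ (h (n - j)) := by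
    intro j hj
    simp only [Finset.mem_filter] at hj
    have hj1 : ((j : ℕ) : ZMod 2) = 1 := by
      rw [← ZMod.natCast_mod, Nat.odd_iff.mp hj.2]; rfl
    rw [map_pow, map_add, map_one, map_mul, PowerSeries.map_C, PowerSeries.map_X]
    simp [Int.coe_castRingHom, Int.cast_natCast, hj1]
  rw [Finset.prod_eq_one heven, mul_one, Finset.prod_congr rfl hodd,
    Finset.prod_pow_eq_pow_sum] at hmap
  have hc := congrArg (PowerSeries.coeff n) hmap
  rw [PowerSeries.coeff_map] at hc
  have hrhs : PowerSeries.coeff n ((1 + PowerSeries.X) ^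
      (∑ j ∈ (Finset.Icc 1 n).filter (fun j => Odd j), h (n - j))) =
      ((∑ j ∈ (Finset.Icc 1 n).filter (fun j => Odd j), h (n - j)).choose n : ZMod 2) := by
    rw [show ((1 : PowerSeries (ZMod 2)) + PowerSeries.X) =
        ((1 + Polynomial.X : Polynomial (ZMod 2)) : PowerSeries (ZMod 2)) by push_cast; ring,
      ← Polynomial.coe_pow, Polynomial.coeff_coe, Polynomial.coeff_one_add_X_pow]
  rw [hrhs, sum_odd_filter n h hn] at hc
  refine (ZMod.intCast_eq_intCast_iff _ _ 2).mp ?_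
  push_cast
  simpa using hc
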